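/- For n ≥ 2, the Randić characteristic polynomial of the Dutch windmill graph D_4^n is λ^{n+1}(λ² − 1/2)^{n−1}(λ² − 1). -/

import Mathlib

open scoped Classical
open Polynomial

/-- The Randić matrix of a simple graph: entry `1/√(dᵢ dⱼ)` for adjacent
vertices `vᵢ ∼ vⱼ` and `0` otherwise. -/
noncomputable def randicMatrix {V : Type*} [Fintype V] (G : SimpleGraph V) : Matrix V V ℝ :=
  fun i j => if G.Adj i j then 1 / Real.sqrt ((G.degree i : ℝ) * (G.degree j : ℝ)) else 0

/-- The Randić energy: the sum of the absolute values of the eigenvalues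
of the Randić matrix. -/
noncomputable def randicEnergy {V : Type*} [Fintype V] [DecidableEq V] (G : SimpleGraph V) : ℝ :=
  if h : (randicMatrix G).IsHermitian then ∑ i, |h.eigenvalues i| else 0

/-- The Dutch windmill graph `D₄ⁿ`: `n` squares sharing the common vertex `none`.
For each `i`, the 4-cycle is `none, (i,0), (i,2), (i,1)`. -/
def dutchWindmillGraph (n : ℕ) : SimpleGraph (Option (Fin n × Fin 3)) where
  Adj x y :=
    (∃ i a, a ≠ 2 ∧ ((x = none ∧ y = some (i, a)) ∨ (y = none ∧ x = some (i, a)))) ∨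
    (∃ i a, a ≠ 2 ∧ ((x = some (i, a) ∧ y = some (i, 2)) ∨ (y = some (i, a) ∧ x = some (i, 2))))
  symm := by
    constructor
    rintro x y (⟨i, a, ha, h | h⟩ | ⟨i, a, ha, h | h⟩)
    · exact Or.inl ⟨i, a, ha, Or.inr h⟩
    · exact Or.inl ⟨i, a, ha, Or.inl h⟩
    · exact Or.inr ⟨i, a, ha, Or.inr h⟩
    · exact Or.inr ⟨i, a, ha, Or.inl h⟩
  loopless := by
    constructor
    rintro x (⟨i, a, ha, ⟨h1, h2⟩ | ⟨h1, h2⟩⟩ | ⟨i, a, ha, ⟨h1, h2⟩ | ⟨h1, h2⟩⟩) <;>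
      first
        | (rw [h1] at h2; simp at h2; done)
        | (rw [h1] at h2; injection h2 with h; exact ha (Prod.mk.injEq .. ▸ h).2)

lemma adj_none_some (n : ℕ) (i : Fin n) (a : Fin 3) :
    (dutchWindmillGraph n).Adj none (some (i, a)) ↔ a ≠ 2 := by
  constructor
  · rintro (⟨j, b, hb, ⟨_, h⟩ | ⟨h, _⟩⟩ | ⟨j, b, hb, ⟨h, _⟩ | ⟨_, h⟩⟩) <;>
      first
      | (injection h with h; cases h; exact hb)
      | exact nomatch h
  · intro ha; exact Or.inl ⟨i, a, ha, Or.inl ⟨rfl, rfl⟩⟩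

lemma adj_some_none (n : ℕ) (i : Fin n) (a : Fin 3) :
    (dutchWindmillGraph n).Adj (some (i, a)) none ↔ a ≠ 2 :=
  ⟨fun h => (adj_none_some n i a).1 h.symm, fun h => ((adj_none_some n i a).2 h).symm⟩

lemma adj_some_some (n : ℕ) (i j : Fin n) (a b : Fin 3) :
    (dutchWindmillGraph n).Adj (some (i, a)) (some (j, b)) ↔
      i = j ∧ ((a ≠ 2 ∧ b = 2) ∨ (a = 2 ∧ b ≠ 2)) := by
  constructor
  · rintro (⟨k, c, hc, ⟨h, _⟩ | ⟨h, _⟩⟩ | ⟨k, c, hc, ⟨h1, h2⟩ | ⟨h1, h2⟩⟩)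
    · exact nomatch h
    · exact nomatch h
    · injection h1 with h1; injection h2 with h2
      obtain ⟨rfl, rfl⟩ := Prod.mk.injEq .. ▸ h1
      obtain ⟨rfl, rfl⟩ := Prod.mk.injEq .. ▸ h2
      exact ⟨rfl, Or.inl ⟨hc, rfl⟩⟩
    · injection h1 with h1; injection h2 with h2
      obtain ⟨rfl, rfl⟩ := Prod.mk.injEq .. ▸ h1
      obtain ⟨rfl, rfl⟩ := Prod.mk.injEq .. ▸ h2
      exact ⟨rfl, Or.inr ⟨rfl, hc⟩⟩
  · rintro ⟨rfl, ⟨ha, rfl⟩ | ⟨rfl, hb⟩⟩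
    · exact Or.inr ⟨i, a, ha, Or.inl ⟨rfl, rfl⟩⟩
    · exact Or.inr ⟨i, b, hb, Or.inr ⟨rfl, rfl⟩⟩

lemma adj_none_none (n : ℕ) : ¬ (dutchWindmillGraph n).Adj none none :=
  (dutchWindmillGraph n).loopless.irrefl none

lemma degree_none (n : ℕ) : (dutchWindmillGraph n).degree none = 2 * n := by
  classical
  rw [← SimpleGraph.card_neighborFinset_eq_degree]
  rw [SimpleGraph.neighborFinset_eq_filter, Finset.card_filter]
  rw [Fintype.sum_option]
  simp only [Fintype.sum_prod_type]
  have : ∀ i : Fin n, ∀ a : Fin 3,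
      (if (dutchWindmillGraph n).Adj none (some (i, a)) then 1 else 0) =
      (if a ≠ 2 then 1 else 0) := by
    intro i a; simp [adj_none_some]
  simp only [this]
  have h2 : ∀ i : Fin n, (∑ a : Fin 3, if a ≠ 2 then 1 else 0) = 2 := by
    intro i; decide
  simp [adj_none_none, Fin.sum_univ_three, Finset.sum_const, mul_comm]

lemma degree_some (n : ℕ) (i : Fin n) (a : Fin 3) :
    (dutchWindmillGraph n).degree (some (i, a)) = 2 := by
  classical
  rw [← SimpleGraph.card_neighborFinset_eq_degree]
  rw [SimpleGraph.neighborFinset_eq_filter, Finset.card_filter]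
  rw [Fintype.sum_option]
  simp only [Fintype.sum_prod_type, adj_some_some, adj_some_none]
  rw [Finset.sum_eq_single i]
  · by_cases ha : a = 2
    · subst ha; simp [Fin.sum_univ_three]
    · have h3 : ∀ b : Fin 3, (¬a = 2 ∧ b = 2 ∨ a = 2 ∧ ¬b = 2) ↔ b = 2 := by
        intro b; simp [ha]
      simp only [Fin.sum_univ_three]
      norm_num [ha, show ¬((0:Fin 3) = 2) by decide, show ¬((1:Fin 3) = 2) by decide]
  · intro j _ hj
    simp [Ne.symm hj, fun b => show ¬ (i = j ∧ _) from fun h => hj (h.1.symm)]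
  · simp
set_option maxHeartbeats 1000000
set_option synthInstance.maxHeartbeats 400000

noncomputable section

abbrev FF := FractionRing (Polynomial ℝ)

def phiF : Polynomial ℝ →+* FF := algebraMap _ _
def sF : ℝ →+* FF := phiF.comp (Polynomial.C)
def tF : FF := phiF X
def dF : FF := tF ^ 3 - tF / 2

lemma phiF_inj : Function.Injective phiF := IsFractionRing.injective _ _

lemma sF_half : sF (1/2 : ℝ) = (1/2 : FF) := by
  rw [map_div₀, map_one, map_ofNat]

lemma dF_eq : dF = phiF (X ^ 3 - Polynomial.C (1/2 : ℝ) * X) := by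
  rw [map_sub, map_pow, map_mul, show phiF (Polynomial.C (1/2:ℝ)) = sF (1/2) from rfl, sF_half]
  show tF ^ 3 - tF / 2 = tF ^ 3 - 1/2 * tF
  ring

lemma dF_ne : dF ≠ 0 := by
  rw [dF_eq]
  intro h
  have h2 := phiF_inj (h.trans (map_zero phiF).symm)
  have := congrArg (fun p => Polynomial.coeff p 3) h2
  simp [Polynomial.coeff_X] at this

def TM : Matrix (Fin 3) (Fin 3) FF :=
  !![tF, 0, -(1/2); 0, tF, -(1/2); -(1/2), -(1/2), tF]

def TMadj : Matrix (Fin 3) (Fin 3) FF :=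
  !![tF^2 - 1/4, 1/4, tF/2; 1/4, tF^2 - 1/4, tF/2; tF/2, tF/2, tF^2]

def TMinv : Matrix (Fin 3) (Fin 3) FF := dF⁻¹ • TMadj

lemma det_TM : TM.det = dF := by
  rw [Matrix.det_fin_three]
  simp only [TM, dF, Matrix.cons_val', Matrix.cons_val_zero, Matrix.cons_val_one,
    Matrix.head_cons, Matrix.empty_val', Matrix.cons_val_fin_one, Matrix.head_fin_const]
  norm_num [Matrix.cons_val_two, Matrix.tail_cons, Matrix.head_cons]
  ring

lemma TM_mul_TMadj : TM * TMadj = dF • 1 := by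
  rw [TM, TMadj, Matrix.mul_fin_three, Matrix.one_fin_three, Matrix.smul_of]
  ext a b
  fin_cases a <;> fin_cases b <;>
    · simp [Matrix.smul_vec3, dF, Matrix.vecHead, Matrix.vecTail]
      try ring

lemma TMadj_mul_TM : TMadj * TM = dF • 1 := by
  rw [TM, TMadj, Matrix.mul_fin_three, Matrix.one_fin_three, Matrix.smul_of]
  ext a b
  fin_cases a <;> fin_cases b <;>
    · simp [Matrix.smul_vec3, dF, Matrix.vecHead, Matrix.vecTail]
      try ring

lemma TM_mul_TMinv : TM * TMinv = 1 := by
  rw [TMinv, Matrix.mul_smul, TM_mul_TMadj, smul_smul, inv_mul_cancel₀ dF_ne, one_smul]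

lemma TMinv_mul_TM : TMinv * TM = 1 := by
  rw [TMinv, Matrix.smul_mul, TMadj_mul_TM, smul_smul, inv_mul_cancel₀ dF_ne, one_smul]
def M0 (n : ℕ) : Matrix (Option (Fin n × Fin 3)) (Option (Fin n × Fin 3)) ℝ :=
  Matrix.of fun x y =>
    match x, y with
    | none, none => 0
    | none, some p => if p.2 = 2 then 0 else 1/(2*Real.sqrt n)
    | some p, none => if p.2 = 2 then 0 else 1/(2*Real.sqrt n)
    | some p, some q =>
        if p.1 = q.1 ∧ ((p.2 ≠ 2 ∧ q.2 = 2) ∨ (p.2 = 2 ∧ q.2 ≠ 2)) then 1/2 else 0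

def Dbig (n : ℕ) : Matrix (Fin n × Fin 3) (Fin n × Fin 3) FF :=
  Matrix.of fun p q => if p.1 = q.1 then TM p.2 q.2 else 0

def Ebig (n : ℕ) : Matrix (Fin n × Fin 3) (Fin n × Fin 3) FF :=
  Matrix.of fun p q => if p.1 = q.1 then TMinv p.2 q.2 else 0

lemma blockMul (n : ℕ) (A B : Matrix (Fin 3) (Fin 3) FF) :
    (Matrix.of (fun p q => if p.1 = q.1 then A p.2 q.2 else 0 :
        (Fin n × Fin 3) → (Fin n × Fin 3) → FF) *
      Matrix.of (fun p q => if p.1 = q.1 then B p.2 q.2 else 0 :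
        (Fin n × Fin 3) → (Fin n × Fin 3) → FF)) =
    Matrix.of (fun p q => if p.1 = q.1 then (A * B) p.2 q.2 else 0) := by
  ext ⟨i, a⟩ ⟨j, b⟩
  conv_lhs => rw [Matrix.mul_apply, Fintype.sum_prod_type]
  rw [Finset.sum_eq_single i]
  · by_cases hij : i = j
    · subst hij
      simp [Matrix.mul_apply]
    · simp [hij]
  · intro k _ hk
    simp [Ne.symm hk]
  · simp

lemma ite_block_one (n : ℕ) :
    Matrix.of (fun p q => if p.1 = q.1 then (1 : Matrix (Fin 3) (Fin 3) FF) p.2 q.2 else 0 :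
      (Fin n × Fin 3) → (Fin n × Fin 3) → FF) = 1 := by
  ext ⟨i, a⟩ ⟨j, b⟩
  simp only [Matrix.of_apply, Matrix.one_apply, Prod.mk.injEq]
  by_cases hij : i = j <;> by_cases hab : a = b <;> simp [hij, hab]

def invDbig (n : ℕ) : Invertible (Dbig n) :=
  ⟨Ebig n,
    by unfold Ebig Dbig; rw [blockMul, TMinv_mul_TM, ite_block_one],
    by unfold Ebig Dbig; rw [blockMul, TM_mul_TMinv, ite_block_one]⟩

lemma det_Dbig (n : ℕ) : (Dbig n).det = dF ^ n := by
  have h : Dbig n = (Matrix.blockDiagonal (fun _ : Fin n => TM)).submatrix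
      (Equiv.prodComm (Fin n) (Fin 3)) (Equiv.prodComm (Fin n) (Fin 3)) := by
    ext ⟨i, a⟩ ⟨j, b⟩
    simp only [Dbig, Matrix.of_apply, Matrix.submatrix_apply, Equiv.prodComm_apply,
      Prod.swap_prod_mk, Matrix.blockDiagonal_apply]
  rw [h, Matrix.det_submatrix_equiv_self, Matrix.det_blockDiagonal]
  simp [det_TM]
lemma sqrt_four : Real.sqrt 4 = 2 := by
  rw [show (4:ℝ) = 2^2 by norm_num, Real.sqrt_sq (by norm_num : (0:ℝ) ≤ 2)]

lemma randic_eq_M0 (n : ℕ) : randicMatrix (dutchWindmillGraph n) = M0 n := by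
  ext x y
  show (if (dutchWindmillGraph n).Adj x y then
      1 / Real.sqrt (((dutchWindmillGraph n).degree x : ℝ) *
        ((dutchWindmillGraph n).degree y : ℝ)) else 0) = M0 n x y
  cases x with
  | none =>
    cases y with
    | none =>
      rw [if_neg (adj_none_none n)]; rfl
    | some p =>
      obtain ⟨i, a⟩ := p
      show _ = if a = 2 then 0 else 1/(2*Real.sqrt n)
      by_cases ha : a = 2
      · rw [if_neg (by rw [adj_none_some]; simpa using ha), if_pos ha]
      · rw [if_pos ((adj_none_some n i a).2 ha), if_neg ha,
          degree_none, degree_some]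
        push_cast
        rw [show (2 * (n:ℝ)) * 2 = 4 * n by ring, Real.sqrt_mul (by norm_num) (n:ℝ), sqrt_four]
  | some p =>
    obtain ⟨i, a⟩ := p
    cases y with
    | none =>
      show _ = if a = 2 then 0 else 1/(2*Real.sqrt n)
      by_cases ha : a = 2
      · rw [if_neg (by rw [adj_some_none]; simpa using ha), if_pos ha]
      · rw [if_pos ((adj_some_none n i a).2 ha), if_neg ha,
          degree_none, degree_some]
        push_cast
        rw [show (2:ℝ) * (2 * (n:ℝ)) = 4 * n by ring, Real.sqrt_mul (by norm_num) (n:ℝ), sqrt_four]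
    | some q =>
      obtain ⟨j, b⟩ := q
      show _ = if i = j ∧ ((a ≠ 2 ∧ b = 2) ∨ (a = 2 ∧ b ≠ 2)) then 1/2 else 0
      by_cases h : i = j ∧ ((a ≠ 2 ∧ b = 2) ∨ (a = 2 ∧ b ≠ 2))
      · rw [if_pos ((adj_some_some n i j a b).2 h), if_pos h, degree_some, degree_some]
        rw [show (((2:ℕ):ℝ)) * ((2:ℕ):ℝ) = 4 by norm_num, sqrt_four]
      · rw [if_neg (fun hc => h ((adj_some_some n i j a b).1 hc)), if_neg h]
def Crow (n : ℕ) (r : FF) : Matrix Unit (Fin n × Fin 3) FF :=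
  Matrix.of fun _ p => if p.2 = 2 then 0 else -r

def Bcol (n : ℕ) (r : FF) : Matrix (Fin n × Fin 3) Unit FF :=
  Matrix.of fun p _ => if p.2 = 2 then 0 else -r

lemma crow_mul_Ebig (n : ℕ) (r : FF) (q : Fin n × Fin 3) :
    (Crow n r * Ebig n) Unit.unit q = -r * (TMinv 0 q.2 + TMinv 1 q.2) := by
  obtain ⟨j, b⟩ := q
  rw [Matrix.mul_apply, Fintype.sum_prod_type]
  rw [Finset.sum_eq_single j]
  · simp only [Crow, Ebig, Matrix.of_apply, if_pos rfl]
    rw [Fin.sum_univ_three]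
    norm_num [show ¬((0:Fin 3) = 2) by decide, show ¬((1:Fin 3) = 2) by decide]
    ring
  · intro k _ hk
    simp [Ebig, hk]
  · simp

lemma sandwich (n : ℕ) (r : FF) :
    (Crow n r * Ebig n * Bcol n r) Unit.unit Unit.unit =
      (n : FF) * (r * r) * (2 * tF ^ 2 * dF⁻¹) := by
  rw [Matrix.mul_apply, Fintype.sum_prod_type]
  have h : ∀ (j : Fin n), ∑ b : Fin 3, (Crow n r * Ebig n) Unit.unit (j, b) *
      (Bcol n r) (j, b) Unit.unit = (r * r) * (2 * tF ^ 2 * dF⁻¹) := by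
    intro j
    rw [Fin.sum_univ_three]
    simp only [crow_mul_Ebig, Bcol, Matrix.of_apply]
    rw [if_pos trivial, if_neg (show ¬((0:Fin 3) = 2) by decide),
      if_neg (show ¬((1:Fin 3) = 2) by decide)]
    simp [TMinv, TMadj, Matrix.smul_apply, smul_eq_mul]
    ring
  rw [Finset.sum_congr rfl (fun j _ => h j), Finset.sum_const, Finset.card_univ,
    Fintype.card_fin, nsmul_eq_mul]
  ring
lemma hblock (n : ℕ) :
    ((Matrix.charmatrix (M0 n)).map phiF).submatrix (Equiv.optionEquivSumPUnit (Fin n × Fin 3)).symm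
      (Equiv.optionEquivSumPUnit (Fin n × Fin 3)).symm =
    Matrix.fromBlocks (Dbig n) (Bcol n (sF (1/(2*Real.sqrt n))))
      (Crow n (sF (1/(2*Real.sqrt n)))) (Matrix.of fun _ _ => tF) := by
  have hN : ∀ u v, ((Matrix.charmatrix (M0 n)).map phiF) u v
      = (if u = v then tF else 0) - sF (M0 n u v) := by
    intro u v
    rw [Matrix.map_apply, Matrix.charmatrix_apply, Matrix.diagonal_apply, map_sub, apply_ite phiF,
      map_zero]
    rfl
  have e1 : ∀ p : Fin n × Fin 3,
      (Equiv.optionEquivSumPUnit (Fin n × Fin 3)).symm (Sum.inl p) = some p := fun _ => rfl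
  have e2 : ∀ u : Unit,
      (Equiv.optionEquivSumPUnit (Fin n × Fin 3)).symm (Sum.inr u) = none := fun _ => rfl
  ext x y
  cases x with
  | inl p =>
    obtain ⟨i, a⟩ := p
    cases y with
    | inl q =>
      obtain ⟨j, b⟩ := q
      rw [Matrix.submatrix_apply, e1, e1, Matrix.fromBlocks_apply₁₁, hN]
      have hM0v : M0 n (some (i,a)) (some (j,b)) =
          if i = j ∧ ((a ≠ 2 ∧ b = 2) ∨ (a = 2 ∧ b ≠ 2)) then 1/2 else 0 := rfl
      rw [hM0v]
      show _ = if i = j then TM a b else 0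
      by_cases hij : i = j
      · subst hij
        rw [if_pos rfl]
        fin_cases a <;> fin_cases b <;>
          simp [TM, sF_half, map_ofNat]
      · simp [hij, Prod.ext_iff]
    | inr u =>
      rw [Matrix.submatrix_apply, e1, e2, Matrix.fromBlocks_apply₁₂, hN]
      have hM0v : M0 n (some (i,a)) none = if a = 2 then 0 else 1/(2*Real.sqrt n) := rfl
      rw [hM0v]
      show _ = if a = 2 then 0 else -(sF (1/(2*Real.sqrt n)))
      by_cases ha : a = 2 <;> simp [ha]
  | inr u =>
    cases y with
    | inl q =>
      obtain ⟨j, b⟩ := q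
      rw [Matrix.submatrix_apply, e2, e1, Matrix.fromBlocks_apply₂₁, hN]
      have hM0v : M0 n none (some (j,b)) = if b = 2 then 0 else 1/(2*Real.sqrt n) := rfl
      rw [hM0v]
      show _ = if b = 2 then 0 else -(sF (1/(2*Real.sqrt n)))
      by_cases hb : b = 2 <;> simp [hb]
    | inr v =>
      rw [Matrix.submatrix_apply, e2, Matrix.fromBlocks_apply₂₂, hN]
      have hM0v : M0 n none none = 0 := rfl
      rw [hM0v]
      simp
theorem stmt9 (n : ℕ) (hn : 2 ≤ n) :
    (randicMatrix (dutchWindmillGraph n)).charpoly =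
      X ^ (n + 1) * (X ^ 2 - C (1 / 2)) ^ (n - 1) * (X ^ 2 - 1) := by
  obtain ⟨m, rfl⟩ : ∃ m, n = m + 1 := ⟨n - 1, by omega⟩
  apply phiF_inj
  rw [randic_eq_M0, Matrix.charpoly, RingHom.map_det, RingHom.mapMatrix_apply]
  rw [← Matrix.det_submatrix_equiv_self
    (Equiv.optionEquivSumPUnit (Fin (m+1) × Fin 3)).symm ((M0 (m+1)).charmatrix.map phiF)]
  rw [hblock (m+1)]
  letI := invDbig (m+1)
  rw [Matrix.det_fromBlocks₁₁]
  have hinv : ⅟(Dbig (m+1)) = Ebig (m+1) := rfl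
  rw [hinv, det_Dbig, Matrix.det_unique]
  set rr : FF := sF (1/(2*Real.sqrt ((m+1:ℕ):ℝ))) with hrr_def
  have hentry : ((Matrix.of (fun _ _ => tF) - Crow (m+1) rr * Ebig (m+1) * Bcol (m+1) rr :
        Matrix Unit Unit FF))
      default default = tF - ((m+1:ℕ) : FF) * (rr * rr) * (2 * tF ^ 2 * dF⁻¹) := by
    rw [Matrix.sub_apply]
    congr 1
    have : (default : Unit) = Unit.unit := rfl
    rw [this, sandwich]
  rw [hentry]
  -- cast facts
  have hnF : ((m+1 : ℕ) : FF) ≠ 0 := by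
    have h1 : ((m+1:ℕ):FF) = sF ((m+1:ℕ):ℝ) := by rw [map_natCast]
    rw [h1]
    intro h
    have := sF.injective (h.trans (map_zero sF).symm)
    exact_mod_cast this
  have hd := dF_ne
  have hrr : rr * rr = (4 * ((m+1:ℕ):FF))⁻¹ := by
    have hss : Real.sqrt ((m:ℝ)+1) * Real.sqrt ((m:ℝ)+1) = (m:ℝ)+1 :=
      Real.mul_self_sqrt (by positivity)
    have hs : Real.sqrt ((m:ℝ)+1) ≠ 0 := by
      refine ne_of_gt (Real.sqrt_pos.2 (by positivity))
    have hmul : (1/(2*Real.sqrt ((m+1:ℕ):ℝ))) * (1/(2*Real.sqrt ((m+1:ℕ):ℝ)))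
        = 1/(4*((m+1:ℕ):ℝ)) := by
      push_cast
      field_simp
      nlinarith [hss]
    rw [hrr_def, ← map_mul, hmul, one_div, map_inv₀, map_mul, map_ofNat, map_natCast]
  rw [hrr]
  -- right-hand side
  have hRHS : phiF (X ^ (m+1+1) * (X^2 - Polynomial.C (1/2:ℝ)) ^ (m+1-1) * (X^2 - 1))
      = tF^(m+2) * (tF^2 - 1/2)^m * (tF^2 - 1) := by
    rw [map_mul, map_mul, map_pow, map_pow, map_sub, map_pow, map_sub, map_pow, map_one,
      show phiF (Polynomial.C (1/2:ℝ)) = sF (1/2) from rfl, sF_half]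
    norm_num [tF]
  rw [hRHS]
  -- final algebra
  have h1 : ((m+1:ℕ):FF) * (4*((m+1:ℕ):FF))⁻¹ * (2*tF^2*dF⁻¹) = tF^2 * dF⁻¹ / 2 := by
    rw [mul_inv]
    rw [show ((m+1:ℕ):FF) * ((4:FF)⁻¹ * ((m+1:ℕ):FF)⁻¹) * (2*tF^2*dF⁻¹)
        = (((m+1:ℕ):FF) * ((m+1:ℕ):FF)⁻¹) * (4⁻¹ * (2*tF^2*dF⁻¹)) from by ring]
    rw [mul_inv_cancel₀ hnF, one_mul]
    ring
  rw [h1]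
  have h2 : dF ^ (m+1) * (tF - tF^2*dF⁻¹/2)
      = dF^m * ((dF*tF) - (dF*dF⁻¹)*(tF^2/2)) := by rw [pow_succ]; ring
  rw [h2, mul_inv_cancel₀ hd, one_mul]
  rw [show dF = tF * (tF^2 - 1/2) from by rw [show dF = tF^3 - tF/2 from rfl]; ring]
  rw [mul_pow]
  ring
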